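/- Let U, V be independent with U ~ N(0,1) and V ~ N(μ, 1) where μ = √(2(r+s) log n), r,s > 0, n ≥ 3. Then for any t > r + s + √s·√(r+s), there exist constants c, C > 0 (depending only on r, s, t) such that (c/log n)·n^{-(t² + r(r+s))/r} ≤ P(|√r·U + √s·V| - √(r+s)·|V| > t√(2 log n)) ≤ (C/log n)·n^{-(t² + r(r+s))/r}. -/

import Mathlib

open MeasureTheory ProbabilityTheory Real Set Filter

lemma integral_exp_neg_mul_Ioi_zero {k : ℝ} (hk : 0 < k) :
    ∫ v in Set.Ioi (0:ℝ), Real.exp (-(k*v)) = 1/k := by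
  have hderiv : ∀ x ∈ Set.Ici (0:ℝ), HasDerivAt (fun v => -Real.exp (-(k*v))/k) (Real.exp (-(k*x))) x := by
    intro x _
    have h1 : HasDerivAt (fun v : ℝ => -(k*v)) (-k) x := by
      simpa using ((hasDerivAt_id x).const_mul k).fun_neg
    have := (h1.exp.fun_neg.div_const k)
    exact this.congr_deriv (by field_simp)
  have htend : Tendsto (fun v => -Real.exp (-(k*v))/k) atTop (nhds 0) := by
    have h1 : Tendsto (fun v : ℝ => -(k*v)) atTop atBot := by
      exact tendsto_neg_atBot_iff.mpr (tendsto_id.const_mul_atTop hk)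
    have := (Real.tendsto_exp_atBot.comp h1).neg.div_const k
    simpa using this
  have := MeasureTheory.integral_Ioi_of_hasDerivAt_of_nonneg' hderiv
    (fun x _ => (Real.exp_pos _).le) htend
  rw [this]; field_simp; simp



lemma lintegral_exp_neg_mul_abs {k : ℝ} (hk : 0 < k) :
    ∫⁻ v : ℝ, ENNReal.ofReal (Real.exp (-(k * |v|))) ≤ ENNReal.ofReal (2 / k) := by
  have hIoi : ∫⁻ v in Set.Ioi (0:ℝ), ENNReal.ofReal (Real.exp (-(k * |v|)))
      = ENNReal.ofReal (1/k) := by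
    rw [setLIntegral_congr_fun measurableSet_Ioi
      (fun v (hv : v ∈ Set.Ioi (0:ℝ)) => show ENNReal.ofReal (Real.exp (-(k*|v|))) = ENNReal.ofReal (Real.exp (-(k*v))) by rw [abs_of_pos hv])]
    rw [← ofReal_integral_eq_lintegral_ofReal]
    · rw [integral_exp_neg_mul_Ioi_zero hk]
    · have := exp_neg_integrableOn_Ioi 0 hk
      simpa [neg_mul, IntegrableOn] using this
    · exact ae_of_all _ (fun v => (Real.exp_pos _).le)
  have hIic : ∫⁻ v in Set.Iic (0:ℝ), ENNReal.ofReal (Real.exp (-(k * |v|)))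
      = ENNReal.ofReal (1/k) := by
    have hmp : MeasurePreserving (fun x : ℝ => -x) volume volume :=
      Measure.measurePreserving_neg _
    have hemb : MeasurableEmbedding (fun x : ℝ => -x) :=
      (Homeomorph.neg ℝ).measurableEmbedding
    have h0 : (fun x : ℝ => -x) ⁻¹' (Set.Iic (0:ℝ)) = Set.Ici (0:ℝ) := by
      ext x; simp
    have := hmp.setLIntegral_comp_preimage_emb hemb
      (fun v => ENNReal.ofReal (Real.exp (-(k * |v|)))) (Set.Iic (0:ℝ))
    rw [h0] at this
    simp only [abs_neg] at this
    rw [← this, ← hIoi]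
    exact setLIntegral_congr Ioi_ae_eq_Ici.symm
  calc ∫⁻ v : ℝ, ENNReal.ofReal (Real.exp (-(k * |v|)))
      = (∫⁻ v in Set.Iic (0:ℝ), ENNReal.ofReal (Real.exp (-(k * |v|))))
        + ∫⁻ v in Set.Ioi (0:ℝ), ENNReal.ofReal (Real.exp (-(k * |v|))) := by
        rw [← compl_Iic, lintegral_add_compl _ measurableSet_Iic]
    _ = ENNReal.ofReal (1/k) + ENNReal.ofReal (1/k) := by rw [hIic, hIoi]
    _ ≤ ENNReal.ofReal (2/k) := by
        rw [← ENNReal.ofReal_add (by positivity) (by positivity)]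
        apply ENNReal.ofReal_le_ofReal; ring_nf
        exact le_rfl


lemma gaussianPDFReal_std (u : ℝ) :
    gaussianPDFReal 0 1 u = (Real.sqrt (2*Real.pi))⁻¹ * Real.exp (-u^2/2) := by
  simp [gaussianPDFReal]

lemma gaussianPDFReal_shift (m u : ℝ) :
    gaussianPDFReal m 1 u = (Real.sqrt (2*Real.pi))⁻¹ * Real.exp (-(u-m)^2/2) := by
  simp [gaussianPDFReal]

lemma hasDerivAt_neg_exp_sq (u : ℝ) :
    HasDerivAt (fun u : ℝ => -Real.exp (-u^2/2)) (u * Real.exp (-u^2/2)) u := by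
  have h1 : HasDerivAt (fun u : ℝ => -u^2/2) (-u) u := by
    have := ((hasDerivAt_pow 2 u).fun_neg.div_const 2)
    exact this.congr_deriv (by simp; ring)
  have := h1.exp.fun_neg
  exact this.congr_deriv (by ring)

lemma tendsto_neg_exp_sq : Tendsto (fun u : ℝ => -Real.exp (-u^2/2)) atTop (nhds 0) := by
  have hq : Tendsto (fun u : ℝ => -u^2/2) atTop atBot := by
    simp only [neg_div]
    exact tendsto_neg_atBot_iff.mpr ((tendsto_pow_atTop two_ne_zero).atTop_div_const two_pos)
  have := (Real.tendsto_exp_atBot.comp hq).neg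
  simpa using this

lemma integral_gauss_kernel_Ioi {x : ℝ} (hx : 0 < x) :
    ∫ u in Set.Ioi x, u * Real.exp (-u^2/2) = Real.exp (-x^2/2) := by
  have := MeasureTheory.integral_Ioi_of_hasDerivAt_of_nonneg'
    (fun u (_ : u ∈ Set.Ici x) => hasDerivAt_neg_exp_sq u)
    (fun u hu => mul_nonneg (le_of_lt (lt_trans hx hu)) (Real.exp_pos _).le)
    tendsto_neg_exp_sq
  simpa using this

lemma gauss_Ioi_le {x : ℝ} (hx : 0 < x) :
    gaussianReal 0 1 (Set.Ioi x)
      ≤ ENNReal.ofReal ((Real.sqrt (2*Real.pi))⁻¹ * (x⁻¹ * Real.exp (-x^2/2))) := by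
  rw [gaussianReal_apply_eq_integral 0 one_ne_zero]
  apply ENNReal.ofReal_le_ofReal
  have hpos : ∀ u ∈ Set.Ioi x, 0 ≤ u * Real.exp (-u^2/2) :=
    fun u hu => mul_nonneg (le_of_lt (lt_trans hx hu)) (Real.exp_pos _).le
  have hint : IntegrableOn (fun u => u * Real.exp (-u^2/2)) (Set.Ioi x) :=
    integrableOn_Ioi_deriv_of_nonneg' (fun u _ => hasDerivAt_neg_exp_sq u) hpos
      tendsto_neg_exp_sq
  calc ∫ u in Set.Ioi x, gaussianPDFReal 0 1 u
      ≤ ∫ u in Set.Ioi x, (Real.sqrt (2*Real.pi))⁻¹ * x⁻¹ * (u * Real.exp (-u^2/2)) := by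
        apply setIntegral_mono_on (integrable_gaussianPDFReal 0 1).integrableOn
          (hint.const_mul _) measurableSet_Ioi
        intro u hu
        rw [gaussianPDFReal_std, mul_assoc, ← mul_assoc x⁻¹]
        apply mul_le_mul_of_nonneg_left _ (by positivity)
        have h1 : 1 ≤ x⁻¹ * u := by
          rw [inv_mul_eq_div, le_div_iff₀ hx]; simpa using hu.le
        calc Real.exp (-u^2/2) = 1 * Real.exp (-u^2/2) := (one_mul _).symm
          _ ≤ x⁻¹ * u * Real.exp (-u^2/2) :=
              mul_le_mul_of_nonneg_right h1 (Real.exp_pos _).le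
  _ = (Real.sqrt (2*Real.pi))⁻¹ * (x⁻¹ * Real.exp (-x^2/2)) := by
        rw [MeasureTheory.integral_const_mul, integral_gauss_kernel_Ioi hx, mul_assoc]



lemma gauss_Iic_neg_eq {x : ℝ} :
    gaussianReal 0 1 (Set.Iic (-x)) = gaussianReal 0 1 (Set.Ioi x) := by
  rw [gaussianReal_apply_eq_integral 0 one_ne_zero, gaussianReal_apply_eq_integral 0 one_ne_zero]
  congr 1
  rw [← integral_comp_neg_Ioi]
  congr 1
  ext u
  rw [gaussianPDFReal_std, gaussianPDFReal_std, neg_sq]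

lemma gauss_abs_le {x : ℝ} (hx : 0 < x) :
    gaussianReal 0 1 {u : ℝ | x < |u|}
      ≤ ENNReal.ofReal (2 * ((Real.sqrt (2*Real.pi))⁻¹ * (x⁻¹ * Real.exp (-x^2/2)))) := by
  have hset : {u : ℝ | x < |u|} ⊆ Set.Iic (-x) ∪ Set.Ioi x := by
    intro u hu
    have hu' : x < |u| := hu
    rcases lt_abs.mp hu' with h | h
    · exact Or.inr h
    · exact Or.inl (by simp only [Set.mem_Iic]; linarith)
  calc gaussianReal 0 1 {u : ℝ | x < |u|}
      ≤ gaussianReal 0 1 (Set.Iic (-x) ∪ Set.Ioi x) := measure_mono hset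
    _ ≤ gaussianReal 0 1 (Set.Iic (-x)) + gaussianReal 0 1 (Set.Ioi x) := measure_union_le _ _
    _ ≤ ENNReal.ofReal ((Real.sqrt (2*Real.pi))⁻¹ * (x⁻¹ * Real.exp (-x^2/2)))
        + ENNReal.ofReal ((Real.sqrt (2*Real.pi))⁻¹ * (x⁻¹ * Real.exp (-x^2/2))) := by
        rw [gauss_Iic_neg_eq]
        exact add_le_add (gauss_Ioi_le hx) (gauss_Ioi_le hx)
    _ = ENNReal.ofReal (2 * ((Real.sqrt (2*Real.pi))⁻¹ * (x⁻¹ * Real.exp (-x^2/2)))) := by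
        rw [← ENNReal.ofReal_add (by positivity) (by positivity)]; ring_nf

lemma gauss_Ioi_ge {x : ℝ} (hx : 1 ≤ x) :
    ENNReal.ofReal ((Real.sqrt (2*Real.pi))⁻¹ * Real.exp (-(3/2))
        * (x⁻¹ * Real.exp (-x^2/2)))
      ≤ gaussianReal 0 1 (Set.Ioi x) := by
  have hx0 : 0 < x := lt_of_lt_of_le one_pos hx
  refine le_trans ?_ (measure_mono (Set.Ioc_subset_Ioi_self : Set.Ioc x (x+x⁻¹) ⊆ _))
  rw [gaussianReal_apply 0 one_ne_zero]
  have hb : ∀ u ∈ Set.Ioc x (x+x⁻¹),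
      ENNReal.ofReal ((Real.sqrt (2*Real.pi))⁻¹ * Real.exp (-(x+x⁻¹)^2/2)) ≤ gaussianPDF 0 1 u := by
    intro u hu
    rw [gaussianPDF]
    apply ENNReal.ofReal_le_ofReal
    rw [gaussianPDFReal_std]
    apply mul_le_mul_of_nonneg_left _ (by positivity)
    apply Real.exp_le_exp.2
    have h2 : u^2 ≤ (x+x⁻¹)^2 := pow_le_pow_left₀ (by linarith [hu.1]) hu.2 2
    linarith
  calc ENNReal.ofReal ((Real.sqrt (2*Real.pi))⁻¹ * Real.exp (-(3/2)) * (x⁻¹ * Real.exp (-x^2/2)))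
      ≤ ENNReal.ofReal ((Real.sqrt (2*Real.pi))⁻¹ * Real.exp (-(x+x⁻¹)^2/2) * x⁻¹) := by
        apply ENNReal.ofReal_le_ofReal
        have hinv : x⁻¹ ≤ 1 := inv_le_one_of_one_le₀ hx
        have hxx : x * x⁻¹ = 1 := mul_inv_cancel₀ (ne_of_gt hx0)
        have hexp : Real.exp (-(3/2)) * Real.exp (-x^2/2) ≤ Real.exp (-(x+x⁻¹)^2/2) := by
          rw [← Real.exp_add]
          apply Real.exp_le_exp.2
          nlinarith [inv_nonneg.2 hx0.le]
        calc (Real.sqrt (2*Real.pi))⁻¹ * Real.exp (-(3/2)) * (x⁻¹ * Real.exp (-x^2/2))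
            = (Real.sqrt (2*Real.pi))⁻¹ * (Real.exp (-(3/2)) * Real.exp (-x^2/2)) * x⁻¹ := by ring
          _ ≤ (Real.sqrt (2*Real.pi))⁻¹ * Real.exp (-(x+x⁻¹)^2/2) * x⁻¹ := by
              apply mul_le_mul_of_nonneg_right _ (by positivity)
              exact mul_le_mul_of_nonneg_left hexp (by positivity)
    _ = ENNReal.ofReal ((Real.sqrt (2*Real.pi))⁻¹ * Real.exp (-(x+x⁻¹)^2/2)) * ENNReal.ofReal x⁻¹ := by
        rw [← ENNReal.ofReal_mul (by positivity)]
    _ = ENNReal.ofReal ((Real.sqrt (2*Real.pi))⁻¹ * Real.exp (-(x+x⁻¹)^2/2))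
          * volume (Set.Ioc x (x+x⁻¹)) := by
        rw [Real.volume_Ioc]; congr 2; ring
    _ = ∫⁻ _ in Set.Ioc x (x+x⁻¹),
          ENNReal.ofReal ((Real.sqrt (2*Real.pi))⁻¹ * Real.exp (-(x+x⁻¹)^2/2)) := by
        rw [setLIntegral_const]
    _ ≤ ∫⁻ u in Set.Ioc x (x+x⁻¹), gaussianPDF 0 1 u :=
        setLIntegral_mono (measurable_gaussianPDF 0 1) hb

lemma gauss_shift_Ioc_ge {m δ : ℝ} (hδ : 0 < δ) (hδm : δ ≤ m) :
    ENNReal.ofReal ((Real.sqrt (2*Real.pi))⁻¹ * Real.exp (-m^2/2) * δ)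
      ≤ gaussianReal m 1 (Set.Ioc 0 δ) := by
  rw [gaussianReal_apply m one_ne_zero]
  have hb : ∀ u ∈ Set.Ioc (0:ℝ) δ,
      ENNReal.ofReal ((Real.sqrt (2*Real.pi))⁻¹ * Real.exp (-m^2/2)) ≤ gaussianPDF m 1 u := by
    intro u hu
    rw [gaussianPDF]
    apply ENNReal.ofReal_le_ofReal
    rw [gaussianPDFReal_shift]
    apply mul_le_mul_of_nonneg_left _ (by positivity)
    apply Real.exp_le_exp.2
    have h2 : (u-m)^2 ≤ m^2 := by
      have h3 : (u-m)^2 = (m-u)^2 := by ring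
      rw [h3]
      apply pow_le_pow_left₀ (by linarith [hu.2]) (by linarith [hu.1]) 2
    linarith
  calc ENNReal.ofReal ((Real.sqrt (2*Real.pi))⁻¹ * Real.exp (-m^2/2) * δ)
      = ENNReal.ofReal ((Real.sqrt (2*Real.pi))⁻¹ * Real.exp (-m^2/2)) * ENNReal.ofReal δ := by
        rw [← ENNReal.ofReal_mul (by positivity)]
    _ = ENNReal.ofReal ((Real.sqrt (2*Real.pi))⁻¹ * Real.exp (-m^2/2))
          * volume (Set.Ioc (0:ℝ) δ) := by rw [Real.volume_Ioc]; congr 2; ring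
    _ = ∫⁻ _ in Set.Ioc (0:ℝ) δ,
          ENNReal.ofReal ((Real.sqrt (2*Real.pi))⁻¹ * Real.exp (-m^2/2)) := by
        rw [setLIntegral_const]
    _ ≤ ∫⁻ u in Set.Ioc (0:ℝ) δ, gaussianPDF m 1 u :=
        setLIntegral_mono (measurable_gaussianPDF m 1) hb


lemma key_ineq {r t L S m₀ α κ Iq : ℝ} (hr : 0 < r) (hS : 0 ≤ S) (hm₀ : 0 ≤ m₀)
    (hS2 : S^2 = 2*L) (hIq : Iq = t^2/r + m₀^2) (hκ : κ = (α*t - r*m₀)/r) (v : ℝ) :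
    L*Iq + κ*S*|v| ≤ (t*S+α*|v|)^2/r/2 + (v - m₀*S)^2/2 := by
  have hL : L = S^2/2 := by linarith
  subst hIq hκ hL
  rw [← sub_nonneg]
  have h1 : 0 ≤ |v| - v := sub_nonneg.2 (le_abs_self v)
  have heq : (t*S+α*|v|)^2/r/2 + (v - m₀*S)^2/2
      - (S^2/2*(t^2/r + m₀^2) + (α*t - r*m₀)/r*S*|v|)
      = (α^2*|v|^2 + r*v^2 + 2*r*(m₀*S)*(|v| - v))/(2*r) := by
    field_simp
    ring_nf
  rw [heq]
  have h2 : 0 ≤ 2*r*(m₀*S)*(|v|-v) := mul_nonneg (by positivity) h1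
  have h3 : 0 ≤ α^2*|v|^2 + r*v^2 + 2*r*(m₀*S)*(|v|-v) :=
    add_nonneg (add_nonneg (by positivity) (by positivity)) h2
  exact div_nonneg h3 (by linarith)

lemma prod4_le {x1 x2 x3 x4 y1 y2 y3 y4 : ℝ} (hx1 : 0 ≤ x1) (hx2 : 0 ≤ x2) (hx3 : 0 ≤ x3)
    (hx4 : 0 ≤ x4) (h1 : x1 ≤ y1) (h2 : x2 ≤ y2) (h3 : x3 ≤ y3) (h4 : x4 ≤ y4) :
    x1*x2*(x3*x4) ≤ y1*y2*(y3*y4) :=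
  mul_le_mul (mul_le_mul h1 h2 hx2 (le_trans hx1 h1))
    (mul_le_mul h3 h4 hx4 (le_trans hx3 h3)) (mul_nonneg hx3 hx4)
    (mul_nonneg (le_trans hx1 h1) (le_trans hx2 h2))

lemma prod3_le {x1 x2 x3 y1 y2 y3 : ℝ} (hx1 : 0 ≤ x1) (hx2 : 0 ≤ x2) (hx3 : 0 ≤ x3)
    (h1 : x1 ≤ y1) (h2 : x2 ≤ y2) (h3 : x3 ≤ y3) :
    x1*x2*x3 ≤ y1*y2*y3 :=
  mul_le_mul (mul_le_mul h1 h2 hx2 (le_trans hx1 h1)) h3 hx3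
    (mul_nonneg (le_trans hx1 h1) (le_trans hx2 h2))

set_option maxHeartbeats 1000000 in
theorem null_tail_asymptotics (r s t : ℝ) (hr : 0 < r) (hs : 0 < s)
    (ht : t > r + s + Real.sqrt s * Real.sqrt (r + s)) :
    ∃ c C : ℝ, 0 < c ∧ 0 < C ∧
      ∀ᶠ (n : ℕ) in Filter.atTop,
        ENNReal.ofReal
            (c / Real.log n * (n : ℝ) ^ (-(t ^ 2 + r * (r + s)) / r)) ≤
          ((gaussianReal 0 1).prod
              (gaussianReal (Real.sqrt (2 * (r + s) * Real.log n)) 1))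
            {p : ℝ × ℝ |
              |Real.sqrt r * p.1 + Real.sqrt s * p.2| - Real.sqrt (r + s) * |p.2| >
                t * Real.sqrt (2 * Real.log n)} ∧
        ((gaussianReal 0 1).prod
              (gaussianReal (Real.sqrt (2 * (r + s) * Real.log n)) 1))
            {p : ℝ × ℝ |
              |Real.sqrt r * p.1 + Real.sqrt s * p.2| - Real.sqrt (r + s) * |p.2| >
                t * Real.sqrt (2 * Real.log n)} ≤
          ENNReal.ofReal
            (C / Real.log n * (n : ℝ) ^ (-(t ^ 2 + r * (r + s)) / r)) := by
  have ha : (0:ℝ) < Real.sqrt r := Real.sqrt_pos.2 hr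
  have hb : (0:ℝ) < Real.sqrt s := Real.sqrt_pos.2 hs
  have hm₀ : (0:ℝ) < Real.sqrt (r+s) := Real.sqrt_pos.2 (by linarith)
  set a := Real.sqrt r with ha_def
  set b := Real.sqrt s with hb_def
  set m₀ := Real.sqrt (r+s) with hm_def
  have ha2 : a^2 = r := Real.sq_sqrt hr.le
  have hb2 : b^2 = s := Real.sq_sqrt hs.le
  have hm2 : m₀^2 = r+s := Real.sq_sqrt (by linarith)
  have hbm : b < m₀ := Real.sqrt_lt_sqrt hs.le (by linarith)
  set α := m₀ - b with hα_def
  have hα : 0 < α := by simp only [hα_def]; linarith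
  have hαr : α * (m₀ + b) = r := by
    simp only [hα_def]; linear_combination hm2 - hb2
  have ht' : m₀ * (m₀ + b) < t := by
    have e : m₀*(m₀+b) = r+s+b*m₀ := by linear_combination hm2
    rw [e]; exact ht
  have ht0 : 0 < t := lt_trans (by positivity) ht'
  set κ := (α*t - r*m₀)/r with hκ_def
  have hκ : 0 < κ := by
    apply div_pos _ hr
    have h1 : α*(m₀*(m₀+b)) < α*t := mul_lt_mul_of_pos_left ht' hα
    have h2 : α*(m₀*(m₀+b)) = r*m₀ := by linear_combination m₀ * hαr
    linarith
  set Iq := t^2/r + (r+s) with hIq_def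
  have hIq' : Iq = t^2/r + m₀^2 := by rw [hIq_def, hm2]
  set c4 := (2*t*m₀ + m₀^2)/(2*r) with hc4_def
  set c := Real.exp (-(3/2) - c4) * a / (18 * (t + m₀)) with hc_def
  set C := 2*a/(t*κ) with hC_def
  have hc0 : 0 < c := by
    rw [hc_def]
    apply div_pos (mul_pos (Real.exp_pos _) ha)
    linarith
  have hC0 : 0 < C := by
    rw [hC_def]
    positivity
  refine ⟨c, C, hc0, hC0, ?_⟩
  have hlog : Tendsto (fun n : ℕ => Real.log n) atTop atTop :=
    Real.tendsto_log_atTop.comp tendsto_natCast_atTop_atTop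
  filter_upwards [hlog.eventually_ge_atTop 1, hlog.eventually_ge_atTop (r/t^2),
    hlog.eventually_ge_atTop (1/m₀), eventually_ge_atTop 1] with n hL1 hLrt hLm hn1
  set L := Real.log n with hL_def
  have hL0 : 0 < L := lt_of_lt_of_le one_pos hL1
  set S := Real.sqrt (2*L) with hS_def
  have hS0 : 0 < S := Real.sqrt_pos.2 (by linarith)
  have hS2 : S^2 = 2*L := Real.sq_sqrt (by linarith)
  have hSS : S*S = 2*L := Real.mul_self_sqrt (by linarith)
  have hS1 : 1 ≤ S := by
    rw [hS_def, show (1:ℝ) = Real.sqrt 1 by simp]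
    exact Real.sqrt_le_sqrt (by linarith)
  have hμ : Real.sqrt (2*(r+s)*L) = m₀ * S := by
    rw [show 2*(r+s)*L = (r+s)*(2*L) by ring, hm_def, hS_def, ← Real.sqrt_mul (by linarith)]
  have hn0 : (0:ℝ) < (n:ℝ) := by
    have : (1:ℝ) ≤ (n:ℝ) := by exact_mod_cast hn1
    linarith
  have hrw : (n:ℝ) ^ (-(t ^ 2 + r * (r + s)) / r) = Real.exp (-(L*Iq)) := by
    rw [Real.rpow_def_of_pos hn0, ← hL_def]
    congr 1
    rw [hIq_def]
    field_simp
  rw [hμ, hrw]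
  set ν := gaussianReal (m₀*S) 1 with hν_def
  set E := {p : ℝ × ℝ | |a * p.1 + b * p.2| - m₀ * |p.2| > t * S} with hE_def
  have hEcont : Continuous fun p : ℝ × ℝ => |a * p.1 + b * p.2| - m₀ * |p.2| := by
    apply Continuous.sub
    · exact ((continuous_const.mul continuous_fst).add
        (continuous_const.mul continuous_snd)).abs
    · exact continuous_const.mul continuous_snd.abs
  have hEm : MeasurableSet E := measurableSet_lt measurable_const hEcont.measurable
  have hsqpi1 : (1:ℝ) ≤ Real.sqrt (2*Real.pi) := by
    rw [show (1:ℝ) = Real.sqrt 1 by simp]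
    exact Real.sqrt_le_sqrt (by linarith [Real.pi_gt_three])
  have hsqpi3 : Real.sqrt (2*Real.pi) ≤ 3 := by
    rw [show (3:ℝ) = Real.sqrt 9 by
      rw [show (9:ℝ) = 3^2 by norm_num, Real.sqrt_sq]; norm_num]
    exact Real.sqrt_le_sqrt (by linarith [Real.pi_le_four])
  have hipinn : (0:ℝ) ≤ (Real.sqrt (2*Real.pi))⁻¹ := by positivity
  have hipi : (Real.sqrt (2*Real.pi))⁻¹ ≤ 1 := inv_le_one_of_one_le₀ hsqpi1
  have hipi3 : (3:ℝ)⁻¹ ≤ (Real.sqrt (2*Real.pi))⁻¹ :=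
    inv_anti₀ (by positivity) hsqpi3
  constructor
  · -- LOWER BOUND
    set δ := S⁻¹ with hδ_def
    set xA := (t*S + m₀*δ)/a with hxA_def
    have hδ0 : 0 < δ := by rw [hδ_def]; positivity
    have hδm : δ ≤ m₀*S := by
      have h1 : 1 ≤ L*m₀ := by
        rw [← div_le_iff₀ hm₀]; exact hLm
      rw [hδ_def, inv_eq_one_div, div_le_iff₀ hS0, mul_assoc, hSS]
      linarith [h1]
    have haS : a ≤ t*S := by
      have h1 : r ≤ t^2*L := by
        rw [div_le_iff₀ (by positivity : (0:ℝ) < t^2)] at hLrt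
        linarith
      have h2 : a ≤ Real.sqrt (t^2*(2*L)) := by
        rw [ha_def]
        exact Real.sqrt_le_sqrt (by linarith [mul_nonneg (sq_nonneg t) hL0.le])
      rwa [Real.sqrt_mul (by positivity) (2*L), Real.sqrt_sq ht0.le, ← hS_def] at h2
    have hxA1 : 1 ≤ xA := by
      rw [hxA_def, le_div_iff₀ ha, one_mul]
      have h3 : 0 < m₀*δ := mul_pos hm₀ hδ0
      linarith
    have hxA0 : 0 < xA := lt_of_lt_of_le one_pos hxA1
    have hδS : δ ≤ S := le_trans (by rw [hδ_def]; exact inv_le_one_of_one_le₀ hS1) hS1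
    have hxAle : xA ≤ (t+m₀)*S/a := by
      rw [hxA_def, div_le_div_iff₀ ha ha]
      have h6 : m₀*δ ≤ m₀*S := mul_le_mul_of_nonneg_left hδS hm₀.le
      have h7 : 0 < (t+m₀)*S - (t*S+m₀*δ) ∨ (0:ℝ) ≤ (t+m₀)*S - (t*S+m₀*δ) := by
        right; ring_nf; ring_nf at h6; linarith
      rcases h7 with h7 | h7
      · linarith [mul_le_mul_of_nonneg_right (show t*S+m₀*δ ≤ (t+m₀)*S by ring_nf; ring_nf at h6; linarith) ha.le]
      · exact mul_le_mul_of_nonneg_right (by ring_nf; ring_nf at h6; linarith) ha.le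
    have hxAinv : a/((t+m₀)*S) ≤ xA⁻¹ := by
      rw [show a/((t+m₀)*S) = ((t+m₀)*S/a)⁻¹ by rw [inv_div]]
      exact inv_anti₀ hxA0 hxAle
    have hxAsq : Real.exp (-(L*(t^2/r) + c4)) ≤ Real.exp (-xA^2/2) := by
      apply Real.exp_le_exp.2
      have e2 : S*δ = 1 := by rw [hδ_def]; exact mul_inv_cancel₀ hS0.ne'
      have e3 : δ*δ ≤ 1 := by
        have h4 : δ ≤ 1 := by rw [hδ_def]; exact inv_le_one_of_one_le₀ hS1
        exact mul_le_one₀ h4 hδ0.le h4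
      have hx2 : xA^2*r = (t*S+m₀*δ)^2 := by
        rw [hxA_def, div_pow, ha2]
        field_simp
      have e5 : (t*S+m₀*δ)^2 ≤ 2*L*t^2 + 2*t*m₀ + m₀^2 := by
        have e1 : (t*S+m₀*δ)^2 = t^2*(S*S)+2*t*m₀*(S*δ)+m₀^2*(δ*δ) := by ring
        have e4 : m₀^2*(δ*δ) ≤ m₀^2 := mul_le_of_le_one_right (sq_nonneg m₀) e3
        rw [e1, hSS, e2]
        linarith [e4]
      rw [neg_div, neg_le_neg_iff, hc4_def,
        show L*(t^2/r) + (2*t*m₀+m₀^2)/(2*r) = (2*L*t^2 + 2*t*m₀ + m₀^2)/(2*r) by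
          field_simp; ring,
        div_le_div_iff₀ (by norm_num : (0:ℝ) < 2) (by positivity : (0:ℝ) < 2*r)]
      linarith [hx2, e5]
    have hsub : (Set.Ioi xA ×ˢ Set.Ioc (0:ℝ) δ) ⊆ E := by
      rintro ⟨u, v⟩ ⟨hu, hv0, hvδ⟩
      simp only [Set.mem_Ioi] at hu
      show t * S < |a * u + b * v| - m₀ * |v|
      have hau : t*S + m₀*δ < a*u := by
        rw [hxA_def, div_lt_iff₀ ha] at hu
        linarith [hu]
      have hbv : 0 ≤ b*v := mul_nonneg hb.le hv0.le
      have habv : 0 < a*u + b*v := by linarith [mul_pos ht0 hS0, mul_pos hm₀ hδ0]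
      rw [abs_of_pos habv, abs_of_pos hv0]
      linarith [mul_le_mul_of_nonneg_left hvδ hm₀.le]
    have hA1 : ENNReal.ofReal ((Real.sqrt (2*Real.pi))⁻¹ * Real.exp (-(3/2))
        * (xA⁻¹ * Real.exp (-xA^2/2))) ≤ gaussianReal 0 1 (Set.Ioi xA) := gauss_Ioi_ge hxA1
    have hA2 : ENNReal.ofReal ((Real.sqrt (2*Real.pi))⁻¹ * Real.exp (-(m₀*S)^2/2) * δ)
        ≤ ν (Set.Ioc 0 δ) := gauss_shift_Ioc_ge hδ0 hδm
    have htm0 : (0:ℝ) < t + m₀ := by linarith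
    have hreal : c/L * Real.exp (-(L*Iq))
        ≤ ((Real.sqrt (2*Real.pi))⁻¹ * Real.exp (-(3/2)) * (xA⁻¹ * Real.exp (-xA^2/2)))
          * ((Real.sqrt (2*Real.pi))⁻¹ * Real.exp (-(m₀*S)^2/2) * δ) := by
      have hexp_eq : Real.exp (-(L*(r+s))) = Real.exp (-(m₀*S)^2/2) := by
        congr 1
        have h5 : (m₀*S)^2 = (r+s)*(2*L) := by rw [mul_pow, hm2, hS2]
        rw [h5]; ring
      calc c/L * Real.exp (-(L*Iq))
          = (3⁻¹ * Real.exp (-(3/2:ℝ)) * ((a/((t+m₀)*S)) * Real.exp (-(L*(t^2/r) + c4))))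
            * (3⁻¹ * Real.exp (-(L*(r+s))) * δ) := by
            rw [hc_def, hδ_def,
              show Real.exp (-(3/2:ℝ) - c4) = Real.exp (-(3/2:ℝ)) * Real.exp (-c4) by
                rw [← Real.exp_add]; ring_nf,
              show Real.exp (-(L*Iq)) = Real.exp (-(L*(t^2/r))) * Real.exp (-(L*(r+s))) by
                rw [← Real.exp_add]; congr 1; rw [hIq_def]; ring,
              show Real.exp (-(L*(t^2/r) + c4)) = Real.exp (-(L*(t^2/r))) * Real.exp (-c4) by
                rw [← Real.exp_add]; ring_nf,
              show L = S*S/2 by linarith [hSS]]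
            field_simp
            ring
        _ ≤ _ := by
            apply mul_le_mul
            · exact prod4_le (by norm_num) (Real.exp_pos _).le
                (div_nonneg ha.le (mul_nonneg htm0.le hS0.le)) (Real.exp_pos _).le
                hipi3 le_rfl hxAinv hxAsq
            · exact prod3_le (by norm_num) (Real.exp_pos _).le hδ0.le
                hipi3 (le_of_eq hexp_eq) le_rfl
            · exact mul_nonneg (mul_nonneg (by norm_num) (Real.exp_pos _).le) hδ0.le
            · exact mul_nonneg (mul_nonneg hipinn (Real.exp_pos _).le)
                (mul_nonneg (inv_nonneg.2 hxA0.le) (Real.exp_pos _).le)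
    calc ENNReal.ofReal (c/L * Real.exp (-(L*Iq)))
        ≤ ENNReal.ofReal (((Real.sqrt (2*Real.pi))⁻¹ * Real.exp (-(3/2))
            * (xA⁻¹ * Real.exp (-xA^2/2)))
          * ((Real.sqrt (2*Real.pi))⁻¹ * Real.exp (-(m₀*S)^2/2) * δ)) :=
          ENNReal.ofReal_le_ofReal hreal
      _ = ENNReal.ofReal ((Real.sqrt (2*Real.pi))⁻¹ * Real.exp (-(3/2))
            * (xA⁻¹ * Real.exp (-xA^2/2)))
          * ENNReal.ofReal ((Real.sqrt (2*Real.pi))⁻¹ * Real.exp (-(m₀*S)^2/2) * δ) :=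
          ENNReal.ofReal_mul (mul_nonneg (mul_nonneg hipinn (Real.exp_pos _).le)
            (mul_nonneg (inv_nonneg.2 hxA0.le) (Real.exp_pos _).le))
      _ ≤ gaussianReal 0 1 (Set.Ioi xA) * ν (Set.Ioc 0 δ) := mul_le_mul' hA1 hA2
      _ = ((gaussianReal 0 1).prod ν) (Set.Ioi xA ×ˢ Set.Ioc (0:ℝ) δ) :=
          (Measure.prod_prod _ _).symm
      _ ≤ ((gaussianReal 0 1).prod ν) E := measure_mono hsub
  · -- UPPER BOUND
    rw [Measure.prod_apply_symm hEm]
    have hsqpine : Real.sqrt (2*Real.pi) ≠ 0 := by positivity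
    have hsec : ∀ v : ℝ, (fun u => (u, v)) ⁻¹' E ⊆ {u : ℝ | (t*S + α*|v|)/a < |u|} := by
      intro v u hu
      simp only [hE_def, Set.mem_preimage, Set.mem_setOf_eq] at hu ⊢
      rw [div_lt_iff₀ ha]
      have h1 : |a*u + b*v| ≤ |a*u| + |b*v| := abs_add_le _ _
      rw [abs_mul, abs_mul, abs_of_pos ha, abs_of_pos hb] at h1
      simp only [hα_def]
      linarith [hu, h1]
    have hxv0 : ∀ v : ℝ, 0 < (t*S + α*|v|)/a := fun v =>
      div_pos (add_pos_of_pos_of_nonneg (mul_pos ht0 hS0)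
        (mul_nonneg hα.le (abs_nonneg v))) ha
    set q := (Real.sqrt (2*Real.pi))⁻¹*(2*((Real.sqrt (2*Real.pi))⁻¹*(a/(t*S)))) with hq_def
    have hq0 : 0 ≤ q := by
      rw [hq_def]
      exact mul_nonneg hipinn (mul_nonneg (by norm_num)
        (mul_nonneg hipinn (div_nonneg ha.le (mul_nonneg ht0.le hS0.le))))
    set c₆ := q * Real.exp (-(L*Iq)) with hc₆_def
    have hc₆0 : 0 ≤ c₆ := by rw [hc₆_def]; exact mul_nonneg hq0 (Real.exp_pos _).le
    have hκS : 0 < κ*S := mul_pos hκ hS0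
    have hmexp : Measurable fun v : ℝ => ENNReal.ofReal (Real.exp (-(κ*S*|v|))) :=
      (Real.measurable_exp.comp ((measurable_abs.const_mul (κ*S)).neg)).ennreal_ofReal
    have hmB : Measurable fun v : ℝ => ENNReal.ofReal
        (2*((Real.sqrt (2*Real.pi))⁻¹*((a/(t*S)) * Real.exp (-((t*S+α*|v|)/a)^2/2)))) := by
      apply Measurable.ennreal_ofReal
      apply Measurable.const_mul
      apply Measurable.const_mul
      apply Measurable.const_mul
      apply Real.measurable_exp.comp
      apply Measurable.div_const
      apply Measurable.neg
      apply Measurable.pow_const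
      apply Measurable.div_const
      exact (measurable_abs.const_mul α).const_add (t*S)
    have hB : ∀ v : ℝ, gaussianReal 0 1 ((fun u => (u, v)) ⁻¹' E)
        ≤ ENNReal.ofReal (2*((Real.sqrt (2*Real.pi))⁻¹*((a/(t*S))
          * Real.exp (-((t*S+α*|v|)/a)^2/2)))) := by
      intro v
      refine le_trans (measure_mono (hsec v))
        (le_trans (gauss_abs_le (hxv0 v)) (ENNReal.ofReal_le_ofReal ?_))
      have hxvinv : ((t*S+α*|v|)/a)⁻¹ ≤ a/(t*S) := by
        rw [show a/(t*S) = (t*S/a)⁻¹ by rw [inv_div]]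
        apply inv_anti₀ (div_pos (mul_pos ht0 hS0) ha)
        rw [div_le_div_iff₀ ha ha]
        have h8 : 0 ≤ α * |v| * a := mul_nonneg (mul_nonneg hα.le (abs_nonneg v)) ha.le
        have h9 : (t*S+α*|v|)*a = t*S*a + α * |v| * a := by ring
        linarith [h8, h9]
      rw [show 2 * ((Real.sqrt (2*Real.pi))⁻¹ * (((t*S+α*|v|)/a)⁻¹
          * Real.exp (-((t*S+α*|v|)/a)^2/2))) = 2*((Real.sqrt (2*Real.pi))⁻¹
          * (((t*S+α*|v|)/a)⁻¹ * Real.exp (-((t*S+α*|v|)/a)^2/2))) from rfl]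
      apply mul_le_mul_of_nonneg_left _ (by norm_num : (0:ℝ) ≤ 2)
      apply mul_le_mul_of_nonneg_left _ hipinn
      exact mul_le_mul_of_nonneg_right hxvinv (Real.exp_pos _).le
    have hpt : ∀ v : ℝ, (gaussianPDF (m₀*S) 1 * fun v => ENNReal.ofReal
        (2*((Real.sqrt (2*Real.pi))⁻¹*((a/(t*S)) * Real.exp (-((t*S+α*|v|)/a)^2/2))))) v
        ≤ ENNReal.ofReal c₆ * ENNReal.ofReal (Real.exp (-(κ*S*|v|))) := by
      intro v
      simp only [Pi.mul_apply, gaussianPDF]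
      rw [← ENNReal.ofReal_mul (gaussianPDFReal_nonneg _ _ _), ← ENNReal.ofReal_mul hc₆0]
      apply ENNReal.ofReal_le_ofReal
      rw [gaussianPDFReal_shift]
      have key : L*Iq + κ*S*|v| ≤ ((t*S+α*|v|)/a)^2/2 + (v-m₀*S)^2/2 := by
        rw [div_pow, ha2]
        exact key_ineq hr hS0.le hm₀.le hS2 hIq' hκ_def v
      calc (Real.sqrt (2*Real.pi))⁻¹ * Real.exp (-(v-m₀*S)^2/2)
            * (2*((Real.sqrt (2*Real.pi))⁻¹*((a/(t*S)) * Real.exp (-((t*S+α*|v|)/a)^2/2))))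
          = q * (Real.exp (-(v-m₀*S)^2/2) * Real.exp (-((t*S+α*|v|)/a)^2/2)) := by
            rw [hq_def]; ring
        _ = q * Real.exp (-(v-m₀*S)^2/2 + -((t*S+α*|v|)/a)^2/2) := by rw [Real.exp_add]
        _ ≤ q * Real.exp (-(L*Iq) + -(κ*S*|v|)) := by
            apply mul_le_mul_of_nonneg_left _ hq0
            apply Real.exp_le_exp.2
            have h6 : -(v-m₀*S)^2/2 = -((v-m₀*S)^2/2) := by ring
            have h7 : -((t*S+α*|v|)/a)^2/2 = -(((t*S+α*|v|)/a)^2/2) := by ring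
            rw [h6, h7]
            linarith [key]
        _ = c₆ * Real.exp (-(κ*S*|v|)) := by
            rw [hc₆_def, Real.exp_add]; ring
    have hfinal : c₆ * (2/(κ*S)) ≤ C/L * Real.exp (-(L*Iq)) := by
      have h1 : c₆ * (2/(κ*S)) = ((Real.sqrt (2*Real.pi))⁻¹*(Real.sqrt (2*Real.pi))⁻¹)
          * ((2*a/(t*κ))/L * Real.exp (-(L*Iq))) := by
        rw [hc₆_def, hq_def, show L = S*S/2 by linarith [hSS]]
        field_simp
      rw [h1, ← hC_def]
      calc ((Real.sqrt (2*Real.pi))⁻¹*(Real.sqrt (2*Real.pi))⁻¹)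
            * (C/L * Real.exp (-(L*Iq)))
          ≤ 1 * (C/L * Real.exp (-(L*Iq))) := by
            apply mul_le_mul_of_nonneg_right _
              (mul_nonneg (div_nonneg hC0.le hL0.le) (Real.exp_pos _).le)
            exact mul_le_one₀ hipi hipinn hipi
        _ = C/L * Real.exp (-(L*Iq)) := one_mul _
    calc ∫⁻ v, gaussianReal 0 1 ((fun u => (u, v)) ⁻¹' E) ∂ν
        ≤ ∫⁻ v, ENNReal.ofReal (2*((Real.sqrt (2*Real.pi))⁻¹*((a/(t*S))
            * Real.exp (-((t*S+α*|v|)/a)^2/2)))) ∂ν := lintegral_mono hB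
      _ = ∫⁻ v, (gaussianPDF (m₀*S) 1 * fun v => ENNReal.ofReal
            (2*((Real.sqrt (2*Real.pi))⁻¹*((a/(t*S))
            * Real.exp (-((t*S+α*|v|)/a)^2/2))))) v := by
          rw [hν_def, gaussianReal_of_var_ne_zero _ one_ne_zero,
            lintegral_withDensity_eq_lintegral_mul _ (measurable_gaussianPDF _ _) hmB]
      _ ≤ ∫⁻ v, ENNReal.ofReal c₆ * ENNReal.ofReal (Real.exp (-(κ*S*|v|))) :=
          lintegral_mono hpt
      _ = ENNReal.ofReal c₆ * ∫⁻ v, ENNReal.ofReal (Real.exp (-(κ*S*|v|))) :=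
          lintegral_const_mul _ hmexp
      _ ≤ ENNReal.ofReal c₆ * ENNReal.ofReal (2/(κ*S)) :=
          mul_le_mul_right (lintegral_exp_neg_mul_abs hκS) _
      _ = ENNReal.ofReal (c₆ * (2/(κ*S))) := (ENNReal.ofReal_mul hc₆0).symm
      _ ≤ ENNReal.ofReal (C/L * Real.exp (-(L*Iq))) := ENNReal.ofReal_le_ofReal hfinal
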